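/- (Classification Table, case f = Φ(u−y): admitted additional symmetry −∂_y − ∂_u.) Let Φ : ℝ → ℝ be any function and let u : ℝ³ → ℝ be C² and satisfy ∂u/∂t = Φ(u−y)·(u_{xx}+u_{yy}) at every point of ℝ³. Then for every s ∈ ℝ, the function v(x,y,t) = u(x, y+s, t) − s also satisfies ∂v/∂t = Φ(v−y)·(v_{xx}+v_{yy}) at every point of ℝ³. -/

import Mathlib

/-- ∂u/∂x at (x,y,t) for u : ℝ³ → ℝ with argument order (x,y,t). -/
noncomputable def px (u : ℝ × ℝ × ℝ → ℝ) (x y t : ℝ) : ℝ :=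
  deriv (fun a => u (a, y, t)) x

/-- ∂u/∂y at (x,y,t). -/
noncomputable def py (u : ℝ × ℝ × ℝ → ℝ) (x y t : ℝ) : ℝ :=
  deriv (fun a => u (x, a, t)) y

/-- ∂u/∂t at (x,y,t). -/
noncomputable def pt (u : ℝ × ℝ × ℝ → ℝ) (x y t : ℝ) : ℝ :=
  deriv (fun a => u (x, y, a)) t

/-- ∂²u/∂x² at (x,y,t). -/
noncomputable def pxx (u : ℝ × ℝ × ℝ → ℝ) (x y t : ℝ) : ℝ :=
  deriv (fun a => px u a y t) x

/-- ∂²u/∂y² at (x,y,t). -/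
noncomputable def pyy (u : ℝ × ℝ × ℝ → ℝ) (x y t : ℝ) : ℝ :=
  deriv (fun a => py u x a t) y

/-- u satisfies the 2D nonlinear heat equation
    u_t = f(x,y,u,u_x,u_y)·(u_xx + u_yy) everywhere on ℝ³. -/
def IsHeatSol (f : ℝ → ℝ → ℝ → ℝ → ℝ → ℝ) (u : ℝ × ℝ × ℝ → ℝ) : Prop :=
  ∀ x y t : ℝ,
    pt u x y t =
      f x y (u (x, y, t)) (px u x y t) (py u x y t) *
        (pxx u x y t + pyy u x y t)

/-- Classification table, case f = Φ(u−y): the equation admits the additional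
    symmetry −∂_y − ∂_u. -/
theorem symmetry_Phi_u_minus_y
    (Φ : ℝ → ℝ) (u : ℝ × ℝ × ℝ → ℝ) (hu : ContDiff ℝ 2 u)
    (hsol : IsHeatSol (fun _ y w _ _ => Φ (w - y)) u) (s : ℝ) :
    IsHeatSol (fun _ y w _ _ => Φ (w - y)) (fun p => u (p.1, p.2.1 + s, p.2.2) - s) := by
  set v : ℝ × ℝ × ℝ → ℝ := fun p => u (p.1, p.2.1 + s, p.2.2) - s with hv
  have hpx : ∀ a y t, px v a y t = px u a (y + s) t := by
    intro a y t
    simp only [px, hv, deriv_sub_const]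
  have hpy : ∀ x a t, py v x a t = py u x (a + s) t := by
    intro x a t
    simp only [py, hv]
    rw [deriv_sub_const]
    exact deriv_comp_add_const (fun c => u (x, c, t)) s a
  have hpt : ∀ x y a, pt v x y a = pt u x (y + s) a := by
    intro x y a
    simp only [pt, hv, deriv_sub_const]
  have hpxx : ∀ x y t, pxx v x y t = pxx u x (y + s) t := by
    intro x y t
    simp only [pxx]
    congr 1
    funext a
    exact hpx a y t
  have hpyy : ∀ x y t, pyy v x y t = pyy u x (y + s) t := by
    intro x y t
    simp only [pyy]
    have h1 : (fun a : ℝ => py v x a t)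
        = (fun a : ℝ => py u x (a + s) t) := by
      funext a; exact hpy x a t
    rw [h1]
    exact deriv_comp_add_const (fun c => py u x c t) s y
  intro x y t
  have h := hsol x (y + s) t
  simp only [hpx, hpy, hpt, hpxx, hpyy]
  simp only [hv]
  have harg : u (x, y + s, t) - s - y = u (x, y + s, t) - (y + s) := by ring
  rw [harg]
  exact h
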